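/- arXiv:1803.08092 — 5 statements merged into one kernel-verified Lean document; each statement's English description precedes it below -/
import Mathlib

section
/- Under the hyperplane reset setup, the map R̄(x) = R(p(x)) + r̂ g_e(x) is a C^∞ diffeomorphism of ℝⁿ onto ℝⁿ, and its inverse is given in closed form by R̄⁻¹(y) = R⁻¹(y − r̂ r_e(y)) + ĝ r_e(y). -/
open Set Function
open scoped RealInnerProductSpace

/-- Hyperplane reset setup: the map `R̄(x) = R(p(x)) + g_e(x) r̂` is a `C^∞`
diffeomorphism of `ℝⁿ`, with inverse `R̄⁻¹(y) = R⁻¹(y − r_e(y) r̂) + r_e(y) ĝ`. -/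
theorem reset_extension_diffeo {n : ℕ}
    (ghat rhat : EuclideanSpace ℝ (Fin n)) (hg : ‖ghat‖ = 1) (hr : ‖rhat‖ = 1) (c d : ℝ)
    (R Rinv : EuclideanSpace ℝ (Fin n) → EuclideanSpace ℝ (Fin n))
    (hR : ContDiff ℝ (⊤:ℕ∞) R) (hRinv : ContDiff ℝ (⊤:ℕ∞) Rinv)
    (hleft : Function.LeftInverse Rinv R) (hright : Function.RightInverse Rinv R)
    (hguard : R '' {x | ⟪ghat, x⟫ - c = 0} = {y | ⟪rhat, y⟫ - d = 0}) :
    ContDiff ℝ (⊤:ℕ∞) (fun x : EuclideanSpace ℝ (Fin n) =>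
        R (x - (⟪ghat, x⟫ - c) • ghat) + (⟪ghat, x⟫ - c) • rhat) ∧
    ContDiff ℝ (⊤:ℕ∞) (fun y : EuclideanSpace ℝ (Fin n) =>
        Rinv (y - (⟪rhat, y⟫ - d) • rhat) + (⟪rhat, y⟫ - d) • ghat) ∧
    Function.LeftInverse
      (fun y : EuclideanSpace ℝ (Fin n) =>
        Rinv (y - (⟪rhat, y⟫ - d) • rhat) + (⟪rhat, y⟫ - d) • ghat)
      (fun x : EuclideanSpace ℝ (Fin n) =>
        R (x - (⟪ghat, x⟫ - c) • ghat) + (⟪ghat, x⟫ - c) • rhat) ∧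
    Function.RightInverse
      (fun y : EuclideanSpace ℝ (Fin n) =>
        Rinv (y - (⟪rhat, y⟫ - d) • rhat) + (⟪rhat, y⟫ - d) • ghat)
      (fun x : EuclideanSpace ℝ (Fin n) =>
        R (x - (⟪ghat, x⟫ - c) • ghat) + (⟪ghat, x⟫ - c) • rhat) := by
  have hgg : ⟪ghat, ghat⟫ = 1 := by
    have := real_inner_self_eq_norm_sq ghat
    rw [hg] at this; simpa using this
  have hrr : ⟪rhat, rhat⟫ = 1 := by
    have := real_inner_self_eq_norm_sq rhat
    rw [hr] at this; simpa using this
  -- smoothness of the two maps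
  have hsg : ContDiff ℝ (⊤:ℕ∞) (fun x : EuclideanSpace ℝ (Fin n) => ⟪ghat, x⟫ - c) := by
    exact ((innerSL ℝ ghat).contDiff).sub contDiff_const
  have hsr : ContDiff ℝ (⊤:ℕ∞) (fun y : EuclideanSpace ℝ (Fin n) => ⟪rhat, y⟫ - d) := by
    exact ((innerSL ℝ rhat).contDiff).sub contDiff_const
  have h1 : ContDiff ℝ (⊤:ℕ∞) (fun x : EuclideanSpace ℝ (Fin n) =>
      R (x - (⟪ghat, x⟫ - c) • ghat) + (⟪ghat, x⟫ - c) • rhat) :=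
    (hR.comp (contDiff_id.sub (hsg.smul contDiff_const))).add (hsg.smul contDiff_const)
  have h2 : ContDiff ℝ (⊤:ℕ∞) (fun y : EuclideanSpace ℝ (Fin n) =>
      Rinv (y - (⟪rhat, y⟫ - d) • rhat) + (⟪rhat, y⟫ - d) • ghat) :=
    (hRinv.comp (contDiff_id.sub (hsr.smul contDiff_const))).add (hsr.smul contDiff_const)
  -- p(x) lands on G̃, so R(p x) lands on R̃
  have hRpx : ∀ x : EuclideanSpace ℝ (Fin n),
      ⟪rhat, R (x - (⟪ghat, x⟫ - c) • ghat)⟫ = d := by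
    intro x
    have hpg : ⟪ghat, x - (⟪ghat, x⟫ - c) • ghat⟫ - c = 0 := by
      rw [inner_sub_right, real_inner_smul_right, hgg]; ring
    have : R (x - (⟪ghat, x⟫ - c) • ghat) ∈ {y : EuclideanSpace ℝ (Fin n) | ⟪rhat, y⟫ - d = 0} := by
      rw [← hguard]; exact ⟨_, hpg, rfl⟩
    have := this
    simp only [mem_setOf_eq] at this
    linarith
  -- Rinv maps R̃ into G̃
  have hRinvq : ∀ y : EuclideanSpace ℝ (Fin n), ⟪rhat, y⟫ = d →
      ⟪ghat, Rinv y⟫ = c := by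
    intro y hy
    have hyR : y ∈ R '' {x : EuclideanSpace ℝ (Fin n) | ⟪ghat, x⟫ - c = 0} := by
      rw [hguard]; simp only [mem_setOf_eq]; linarith
    obtain ⟨w, hw, hwy⟩ := hyR
    have : Rinv y = w := by rw [← hwy, hleft w]
    rw [this]
    simp only [mem_setOf_eq] at hw
    linarith
  refine ⟨h1, h2, ?_, ?_⟩
  · intro x
    have key : ⟪rhat, R (x - (⟪ghat, x⟫ - c) • ghat) + (⟪ghat, x⟫ - c) • rhat⟫ - d
        = ⟪ghat, x⟫ - c := by
      rw [inner_add_right, real_inner_smul_right, hrr, hRpx x]; ring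
    simp only [key]
    have : R (x - (⟪ghat, x⟫ - c) • ghat) + (⟪ghat, x⟫ - c) • rhat
        - (⟪ghat, x⟫ - c) • rhat = R (x - (⟪ghat, x⟫ - c) • ghat) := by abel
    rw [this, hleft]
    abel
  · intro y
    have hq : ⟪rhat, y - (⟪rhat, y⟫ - d) • rhat⟫ = d := by
      rw [inner_sub_right, real_inner_smul_right, hrr]; ring
    have hG : ⟪ghat, Rinv (y - (⟪rhat, y⟫ - d) • rhat)⟫ = c := hRinvq _ hq
    have key : ⟪ghat, Rinv (y - (⟪rhat, y⟫ - d) • rhat) + (⟪rhat, y⟫ - d) • ghat⟫ - c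
        = ⟪rhat, y⟫ - d := by
      rw [inner_add_right, real_inner_smul_right, hgg, hG]; ring
    simp only [key]
    have : Rinv (y - (⟪rhat, y⟫ - d) • rhat) + (⟪rhat, y⟫ - d) • ghat
        - (⟪rhat, y⟫ - d) • ghat = Rinv (y - (⟪rhat, y⟫ - d) • rhat) := by abel
    rw [this, hright]
    abel
end

section
/- Under the hyperplane reset setup, for every x ∈ ℝⁿ one has r_e(R̄(x)) = g_e(x), and consequently for every x, w ∈ ℝⁿ the total derivative of R̄ satisfies r̂ᵀ (DR̄(x) · w) = ĝᵀ w. -/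
open Set Function
open scoped RealInnerProductSpace

/-- Under the hyperplane reset setup, `r_e(R̄(x)) = g_e(x)` for every `x`, and
consequently `r̂ᵀ (DR̄(x) · w) = ĝᵀ w` for every `x, w`. -/
theorem reset_extension_level {n : ℕ}
    (ghat rhat : EuclideanSpace ℝ (Fin n)) (hg : ‖ghat‖ = 1) (hr : ‖rhat‖ = 1) (c d : ℝ)
    (R Rinv : EuclideanSpace ℝ (Fin n) → EuclideanSpace ℝ (Fin n))
    (hR : ContDiff ℝ (⊤:ℕ∞) R) (hRinv : ContDiff ℝ (⊤:ℕ∞) Rinv)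
    (hleft : Function.LeftInverse Rinv R) (hright : Function.RightInverse Rinv R)
    (hguard : R '' {x | ⟪ghat, x⟫ - c = 0} = {y | ⟪rhat, y⟫ - d = 0}) :
    (∀ x : EuclideanSpace ℝ (Fin n),
      ⟪rhat, R (x - (⟪ghat, x⟫ - c) • ghat) + (⟪ghat, x⟫ - c) • rhat⟫ - d
        = ⟪ghat, x⟫ - c) ∧
    (∀ x w : EuclideanSpace ℝ (Fin n),
      ⟪rhat, fderiv ℝ (fun z : EuclideanSpace ℝ (Fin n) =>
          R (z - (⟪ghat, z⟫ - c) • ghat) + (⟪ghat, z⟫ - c) • rhat) x w⟫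
        = ⟪ghat, w⟫) := by
  have hgg : ⟪ghat, ghat⟫ = (1:ℝ) := by
    rw [real_inner_self_eq_norm_sq, hg]; norm_num
  have hrr : ⟪rhat, rhat⟫ = (1:ℝ) := by
    rw [real_inner_self_eq_norm_sq, hr]; norm_num
  have key : ∀ x : EuclideanSpace ℝ (Fin n),
      ⟪rhat, R (x - (⟪ghat, x⟫ - c) • ghat)⟫ = d := by
    intro x
    have hp : x - (⟪ghat, x⟫ - c) • ghat ∈ {x : EuclideanSpace ℝ (Fin n) | ⟪ghat, x⟫ - c = 0} := by
      simp only [mem_setOf_eq, inner_sub_right, inner_smul_right, hgg]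
      ring
    have hmem : R (x - (⟪ghat, x⟫ - c) • ghat) ∈
        ({y : EuclideanSpace ℝ (Fin n) | ⟪rhat, y⟫ - d = 0}) := by
      rw [← hguard]; exact ⟨_, hp, rfl⟩
    have := hmem
    simp only [mem_setOf_eq] at this
    linarith
  have part1 : ∀ x : EuclideanSpace ℝ (Fin n),
      ⟪rhat, R (x - (⟪ghat, x⟫ - c) • ghat) + (⟪ghat, x⟫ - c) • rhat⟫ - d
        = ⟪ghat, x⟫ - c := by
    intro x
    rw [inner_add_right, inner_smul_right, key x, hrr]
    ring
  refine ⟨part1, ?_⟩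
  intro x w
  set f : EuclideanSpace ℝ (Fin n) → EuclideanSpace ℝ (Fin n) :=
    fun z => R (z - (⟪ghat, z⟫ - c) • ghat) + (⟪ghat, z⟫ - c) • rhat with hf
  have h1 : Differentiable ℝ (fun z : EuclideanSpace ℝ (Fin n) => ⟪ghat, z⟫ - c) :=
    (innerSL ℝ ghat).differentiable.sub_const c
  have hdiff : Differentiable ℝ f := by
    have := ((hR.differentiable (by norm_num)).comp
      (differentiable_id.sub (h1.smul_const ghat))).add (h1.smul_const rhat)
    exact this
  have hA : HasFDerivAt (fun z : EuclideanSpace ℝ (Fin n) => ⟪rhat, f z⟫)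
      ((innerSL ℝ rhat).comp (fderiv ℝ f x)) x :=
    ((innerSL ℝ rhat).hasFDerivAt).comp x (hdiff x).hasFDerivAt
  have hB : HasFDerivAt (fun z : EuclideanSpace ℝ (Fin n) => ⟪rhat, f z⟫)
      (innerSL ℝ ghat) x := by
    have heq : (fun z : EuclideanSpace ℝ (Fin n) => ⟪rhat, f z⟫)
        = fun z => ⟪ghat, z⟫ + (d - c) := by
      funext z
      have := part1 z
      simp only [hf]
      linarith [part1 z]
    rw [heq]
    simpa using ((innerSL ℝ ghat).hasFDerivAt (x := x)).add_const (d - c)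
  have huniq := hA.unique hB
  have : ((innerSL ℝ rhat).comp (fderiv ℝ f x)) w = (innerSL ℝ ghat) w := by rw [huniq]
  simpa using this
end

section
/- Under the hyperplane reset setup, for every x ∈ G̃, every u ∈ ℝᵐ, and every map f₂ : ℝⁿ × ℝᵐ → ℝⁿ, the pullback vector field f_e'(x,u) = (DR̄(x))⁻¹ · f₂(R̄(x), u) satisfies ĝᵀ f_e'(x,u) = r̂ᵀ f₂(R(x), u). In particular, if for all x ∈ G̃ and u ∈ U either ĝᵀ f₁(x,u) > 0 or r̂ᵀ f₂(R(x),u) < 0 (the hybrid transversality condition), then for all x ∈ G̃ and u ∈ U either ∇g_e(x) · f₁(x,u) > 0 or ∇g_e(x) · f_e'(x,u) < 0 (the Filippov transversality condition for the glued piecewise field, whose discontinuity surface is G̃). -/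
open Set Function
open scoped RealInnerProductSpace

lemma key_aux {n : ℕ} (ghat rhat : EuclideanSpace ℝ (Fin n)) (hg : ‖ghat‖ = 1) (hr : ‖rhat‖ = 1)
    (c d : ℝ) (R Rinv : EuclideanSpace ℝ (Fin n) → EuclideanSpace ℝ (Fin n))
    (hR : ContDiff ℝ (⊤:ℕ∞) R) (hRinv : ContDiff ℝ (⊤:ℕ∞) Rinv)
    (hleft : Function.LeftInverse Rinv R)
    (hguard : R '' {x | ⟪ghat, x⟫ - c = 0} = {y | ⟪rhat, y⟫ - d = 0})
    (x : EuclideanSpace ℝ (Fin n)) (hx : ⟪ghat, x⟫ - c = 0) :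
    ∀ v : EuclideanSpace ℝ (Fin n),
      ⟪ghat, (fderiv ℝ (fun z : EuclideanSpace ℝ (Fin n) =>
          R (z - (⟪ghat, z⟫ - c) • ghat) + (⟪ghat, z⟫ - c) • rhat) x).inverse v⟫
        = ⟪rhat, v⟫ := by
  have hgg : ⟪ghat, ghat⟫ = 1 := by
    rw [real_inner_self_eq_norm_sq, hg]; norm_num
  have hrr : ⟪rhat, rhat⟫ = 1 := by
    rw [real_inner_self_eq_norm_sq, hr]; norm_num
  have hRdiff : Differentiable ℝ R := hR.differentiable (by simp)
  have hRinvdiff : Differentiable ℝ Rinv := hRinv.differentiable (by simp)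
  set G : EuclideanSpace ℝ (Fin n) →L[ℝ] ℝ := innerSL ℝ ghat with hG
  set P : EuclideanSpace ℝ (Fin n) →L[ℝ] EuclideanSpace ℝ (Fin n) :=
    ContinuousLinearMap.id ℝ _ - G.smulRight ghat with hP
  have hDR := (hRdiff x).hasFDerivAt
  set DR := fderiv ℝ R x with hDRdef
  set A : EuclideanSpace ℝ (Fin n) →L[ℝ] EuclideanSpace ℝ (Fin n) :=
    DR.comp P + G.smulRight rhat with hA
  have hp : HasFDerivAt (fun z : EuclideanSpace ℝ (Fin n) => z - (⟪ghat, z⟫ - c) • ghat) P x := by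
    have h1 : HasFDerivAt (fun z : EuclideanSpace ℝ (Fin n) => ⟪ghat, z⟫ - c) G x :=
      ((innerSL ℝ ghat).hasFDerivAt).sub_const c
    exact (hasFDerivAt_id x).sub (h1.smul_const ghat)
  have hpx : x - (⟪ghat, x⟫ - c) • ghat = x := by rw [hx]; simp
  -- fderiv of the glued map at x is A
  have hfd : fderiv ℝ (fun z : EuclideanSpace ℝ (Fin n) =>
      R (z - (⟪ghat, z⟫ - c) • ghat) + (⟪ghat, z⟫ - c) • rhat) x = A := by
    have hDR' : HasFDerivAt R DR (x - (⟪ghat, x⟫ - c) • ghat) := hpx.symm ▸ hDR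
    have h1 : HasFDerivAt (fun z : EuclideanSpace ℝ (Fin n) =>
        R (z - (⟪ghat, z⟫ - c) • ghat)) (DR.comp P) x := hDR'.comp x hp
    have h2 : HasFDerivAt (fun z : EuclideanSpace ℝ (Fin n) => (⟪ghat, z⟫ - c) • rhat)
        (G.smulRight rhat) x :=
      (((innerSL ℝ ghat).hasFDerivAt).sub_const c).smul_const rhat
    exact (h1.add h2).fderiv
  -- P kills the ghat-component
  have hPperp : ∀ w : EuclideanSpace ℝ (Fin n), ⟪ghat, P w⟫ = 0 := by
    intro w
    simp only [hP, ContinuousLinearMap.sub_apply, ContinuousLinearMap.id_apply,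
      ContinuousLinearMap.smulRight_apply, hG, innerSL_apply_apply, inner_sub_right,
      real_inner_smul_right]
    rw [hgg]; ring
  -- tangency: rhat ⟂ DR(x) t for t ⟂ ghat
  have htan : ∀ t : EuclideanSpace ℝ (Fin n), ⟪ghat, t⟫ = 0 → ⟪rhat, DR t⟫ = 0 := by
    intro t ht
    have hconst : ∀ s : ℝ, ⟪rhat, R (x + s • t)⟫ = d := by
      intro s
      have hmem : x + s • t ∈ {z : EuclideanSpace ℝ (Fin n) | ⟪ghat, z⟫ - c = 0} := by
        simp only [Set.mem_setOf_eq, inner_add_right, real_inner_smul_right, ht]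
        simpa using hx
      have := hguard ▸ Set.mem_image_of_mem R hmem
      simp only [Set.mem_setOf_eq] at this
      linarith
    have hder : HasDerivAt (fun s : ℝ => ⟪rhat, R (x + s • t)⟫) ⟪rhat, DR t⟫ 0 := by
      have hc : HasDerivAt (fun s : ℝ => x + s • t) t 0 := by
        simpa using ((hasDerivAt_id (0:ℝ)).smul_const t).const_add x
      have hR0 : HasFDerivAt R DR ((fun s : ℝ => x + s • t) 0) := by simpa using hDR
      have hcomp := hR0.comp_hasDerivAt 0 hc
      have := ((innerSL ℝ rhat).hasFDerivAt.comp_hasDerivAt 0 hcomp)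
      exact this
    have : (fun s : ℝ => ⟪rhat, R (x + s • t)⟫) = fun _ => d := funext hconst
    have h0 : HasDerivAt (fun _ : ℝ => d) ⟪rhat, DR t⟫ 0 := this ▸ hder
    have := h0.deriv
    simpa using this.symm
  -- key algebraic identity: ⟪ghat, w⟫ = ⟪rhat, A w⟫
  have hkey : ∀ w : EuclideanSpace ℝ (Fin n), ⟪rhat, A w⟫ = ⟪ghat, w⟫ := by
    intro w
    have h1 : ⟪rhat, DR (P w)⟫ = 0 := htan (P w) (hPperp w)
    simp only [hA, ContinuousLinearMap.add_apply, ContinuousLinearMap.coe_comp',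
      Function.comp_apply, ContinuousLinearMap.smulRight_apply, hG, innerSL_apply_apply,
      inner_add_right, real_inner_smul_right, h1, hrr]
    ring
  -- A is injective, hence bijective
  have hDRinj : Function.Injective DR := by
    have hc : HasFDerivAt (Rinv ∘ R) ((fderiv ℝ Rinv (R x)).comp DR) x :=
      (hRinvdiff (R x)).hasFDerivAt.comp x hDR
    have hid : HasFDerivAt (Rinv ∘ R) (ContinuousLinearMap.id ℝ _) x := by
      have : Rinv ∘ R = id := funext hleft
      rw [this]; exact hasFDerivAt_id x
    have heq := hc.unique hid
    intro a b hab
    have : (fderiv ℝ Rinv (R x)).comp DR a = (fderiv ℝ Rinv (R x)).comp DR b := by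
      simp [ContinuousLinearMap.comp_apply, hab]
    rw [heq] at this
    simpa using this
  have hAinj : Function.Injective A := by
    intro a b hab
    have h0 : A (a - b) = 0 := by rw [map_sub, hab, sub_self]
    have hg0 : ⟪ghat, a - b⟫ = 0 := by
      have h := hkey (a - b)
      rw [h0, inner_zero_right] at h
      exact h.symm
    have hAw : A (a - b) = DR (P (a - b)) + ⟪ghat, a - b⟫ • rhat := by
      simp [hA, hG]
    have hDRP : DR (P (a - b)) = 0 := by
      rw [h0, hg0] at hAw; simpa using hAw.symm
    have hP0 : P (a - b) = 0 := by
      apply hDRinj; simpa using hDRP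
    have hPab : P (a - b) = (a - b) - ⟪ghat, a - b⟫ • ghat := by simp [hP, hG]
    rw [hPab, hg0] at hP0
    have hz : a - b = 0 := by simpa using hP0
    exact sub_eq_zero.mp hz
  have hAbij : Function.Bijective A :=
    ⟨hAinj, LinearMap.injective_iff_surjective.mp hAinj⟩
  let e : EuclideanSpace ℝ (Fin n) ≃L[ℝ] EuclideanSpace ℝ (Fin n) :=
    (LinearEquiv.ofBijective (A : EuclideanSpace ℝ (Fin n) →ₗ[ℝ] EuclideanSpace ℝ (Fin n))
      hAbij).toContinuousLinearEquiv
  have hcoe : (e : EuclideanSpace ℝ (Fin n) →L[ℝ] EuclideanSpace ℝ (Fin n)) = A := by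
    ext w; rfl
  intro v
  rw [hfd]
  have hinv : A.inverse = (e.symm : EuclideanSpace ℝ (Fin n) →L[ℝ] EuclideanSpace ℝ (Fin n)) := by
    rw [← hcoe]; exact ContinuousLinearMap.inverse_equiv e
  rw [hinv]
  have hAe : A (e.symm v) = v := by
    have h := e.apply_symm_apply v
    calc A (e.symm v) = e (e.symm v) := by rw [← hcoe]; rfl
      _ = v := h
  calc ⟪ghat, (e.symm : EuclideanSpace ℝ (Fin n) →L[ℝ] EuclideanSpace ℝ (Fin n)) v⟫
      = ⟪rhat, A (e.symm v)⟫ := (hkey _).symm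
    _ = ⟪rhat, v⟫ := by rw [hAe]

/-- Under the hyperplane reset setup, for `x ∈ G̃` the pullback vector field
`f_e'(x,u) = (DR̄(x))⁻¹ f₂(R̄(x),u)` satisfies `ĝᵀ f_e'(x,u) = r̂ᵀ f₂(R(x),u)`; in
particular the hybrid transversality condition implies the Filippov transversality
condition for the glued piecewise field. -/
theorem pullback_transversality {n m : ℕ}
    (ghat rhat : EuclideanSpace ℝ (Fin n)) (hg : ‖ghat‖ = 1) (hr : ‖rhat‖ = 1) (c d : ℝ)
    (R Rinv : EuclideanSpace ℝ (Fin n) → EuclideanSpace ℝ (Fin n))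
    (hR : ContDiff ℝ (⊤:ℕ∞) R) (hRinv : ContDiff ℝ (⊤:ℕ∞) Rinv)
    (hleft : Function.LeftInverse Rinv R) (hright : Function.RightInverse Rinv R)
    (hguard : R '' {x | ⟪ghat, x⟫ - c = 0} = {y | ⟪rhat, y⟫ - d = 0}) :
    (∀ f₂ : EuclideanSpace ℝ (Fin n) → EuclideanSpace ℝ (Fin m) → EuclideanSpace ℝ (Fin n),
      ∀ x : EuclideanSpace ℝ (Fin n), ⟪ghat, x⟫ - c = 0 →
      ∀ u : EuclideanSpace ℝ (Fin m),
        ⟪ghat, (fderiv ℝ (fun z : EuclideanSpace ℝ (Fin n) =>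
            R (z - (⟪ghat, z⟫ - c) • ghat) + (⟪ghat, z⟫ - c) • rhat) x).inverse
          (f₂ (R (x - (⟪ghat, x⟫ - c) • ghat) + (⟪ghat, x⟫ - c) • rhat) u)⟫
          = ⟪rhat, f₂ (R x) u⟫) ∧
    (∀ f₁ f₂ : EuclideanSpace ℝ (Fin n) → EuclideanSpace ℝ (Fin m) → EuclideanSpace ℝ (Fin n),
      ∀ U : Set (EuclideanSpace ℝ (Fin m)), IsCompact U →
      (∀ x : EuclideanSpace ℝ (Fin n), ⟪ghat, x⟫ - c = 0 → ∀ u ∈ U,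
        0 < ⟪ghat, f₁ x u⟫ ∨ ⟪rhat, f₂ (R x) u⟫ < 0) →
      ∀ x : EuclideanSpace ℝ (Fin n), ⟪ghat, x⟫ - c = 0 → ∀ u ∈ U,
        0 < ⟪ghat, f₁ x u⟫ ∨
        ⟪ghat, (fderiv ℝ (fun z : EuclideanSpace ℝ (Fin n) =>
            R (z - (⟪ghat, z⟫ - c) • ghat) + (⟪ghat, z⟫ - c) • rhat) x).inverse
          (f₂ (R (x - (⟪ghat, x⟫ - c) • ghat) + (⟪ghat, x⟫ - c) • rhat) u)⟫ < 0) := by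
  have key := key_aux ghat rhat hg hr c d R Rinv hR hRinv hleft hguard
  constructor
  · intro f₂ x hx u
    have harg : R (x - (⟪ghat, x⟫ - c) • ghat) + (⟪ghat, x⟫ - c) • rhat = R x := by
      rw [hx]; simp
    rw [harg]
    exact key x hx (f₂ (R x) u)
  · intro f₁ f₂ U hU htrans x hx u hu
    have harg : R (x - (⟪ghat, x⟫ - c) • ghat) + (⟪ghat, x⟫ - c) • rhat = R x := by
      rw [hx]; simp
    rw [harg, key x hx (f₂ (R x) u)]
    exact htrans x hx u hu
end

section
/- For the bimodal piecewise-smooth control system, the sliding vector field is well defined: if x ∈ Σ and u ∈ U are such that a := ∇g(x)·f₁(x,u) > 0 and b := ∇g(x)·f₂(x,u) < 0, then the set of elements of 𝓕[f](x,u) tangent to Σ is a singleton, namely {v ∈ 𝓕[f](x,u) : ∇g(x)·v = 0} = { (a f₂(x,u) − b f₁(x,u)) / (a − b) }. -/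
open Set MeasureTheory Function Pointwise

noncomputable def filippovReg {n m : ℕ}
    (f : EuclideanSpace ℝ (Fin n) → EuclideanSpace ℝ (Fin m) → EuclideanSpace ℝ (Fin n))
    (D : Set (EuclideanSpace ℝ (Fin n)))
    (x : EuclideanSpace ℝ (Fin n)) (u : EuclideanSpace ℝ (Fin m)) :
    Set (EuclideanSpace ℝ (Fin n)) :=
  ⋂ δ > (0:ℝ), ⋂ (S : Set (EuclideanSpace ℝ (Fin n))) (_ : volume S = 0),
    closure (convexHull ℝ ((fun y => f y u) '' ((Metric.ball x δ \ S) ∩ D)))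

private lemma isClosed_segment'' {E : Type*} [NormedAddCommGroup E] [NormedSpace ℝ E]
    (p q : E) : IsClosed (segment ℝ p q) := by
  rw [segment_eq_image]
  exact (isCompact_Icc.image (by fun_prop)).isClosed

/-- If the derivative of `g` in direction `h` is negative, then `g` takes negative values
in every ball around `x`. -/
private lemma exists_ball_neg' {E : Type*} [NormedAddCommGroup E] [NormedSpace ℝ E]
    (g : E → ℝ) {d : E →L[ℝ] ℝ} {x : E}
    (hd : HasFDerivAt g d x) (hx : g x = 0)
    (h : E) (hh : d h < 0) :
    ∀ δ > (0:ℝ), ∃ y ∈ Metric.ball x δ, g y < 0 := by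
  intro δ hδ
  have hline : HasDerivAt (fun s : ℝ => x + s • h) h 0 := by
    simpa using ((hasDerivAt_id (0:ℝ)).smul_const h).const_add x
  have hd' : HasFDerivAt g d ((fun s : ℝ => x + s • h) 0) := by simpa using hd
  have hφ : HasDerivAt (g ∘ fun s : ℝ => x + s • h) (d h) 0 :=
    hd'.comp_hasDerivAt 0 hline
  rw [hasDerivAt_iff_tendsto_slope] at hφ
  have h1 : ∀ᶠ s in nhdsWithin (0:ℝ) {0}ᶜ,
      slope (g ∘ fun s : ℝ => x + s • h) 0 s < 0 := hφ.eventually_lt_const hh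
  have h2 : ∀ᶠ s in nhdsWithin (0:ℝ) (Set.Ioi 0),
      slope (g ∘ fun s : ℝ => x + s • h) 0 s < 0 :=
    h1.filter_mono (nhdsWithin_mono 0 (fun s hs => ne_of_gt hs))
  have h3 : ∀ᶠ s in nhds (0:ℝ), ‖s‖ * ‖h‖ < δ := by
    have ht : Filter.Tendsto (fun s : ℝ => ‖s‖ * ‖h‖) (nhds 0) (nhds 0) := by
      simpa using (tendsto_norm_zero (E := ℝ)).mul_const ‖h‖
    exact ht.eventually_lt_const hδ
  have h3' : ∀ᶠ s in nhdsWithin (0:ℝ) (Set.Ioi 0), ‖s‖ * ‖h‖ < δ :=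
    h3.filter_mono nhdsWithin_le_nhds
  have h4 : ∀ᶠ s in nhdsWithin (0:ℝ) (Set.Ioi 0), s ∈ Set.Ioi (0:ℝ) :=
    self_mem_nhdsWithin
  obtain ⟨s, ⟨hs1, hs2⟩, hs3⟩ := ((h2.and h3').and h4).exists
  have hs : (0:ℝ) < s := hs3
  have hslope : (g (x + s • h)) / s < 0 := by
    have : slope (g ∘ fun s : ℝ => x + s • h) 0 s
        = (g (x + s • h)) / s := by
      simp [slope, Function.comp, hx, div_eq_inv_mul]
    rw [← this]; exact hs1
  have hneg : g (x + s • h) < 0 := by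
    by_contra hcon
    push_neg at hcon
    have : 0 ≤ g (x + s • h) / s := div_nonneg hcon hs.le
    linarith
  refine ⟨x + s • h, ?_, hneg⟩
  rw [Metric.mem_ball, dist_eq_norm]
  have : ‖x + s • h - x‖ = ‖s‖ * ‖h‖ := by
    simp [norm_smul]
  rw [this]; exact hs2

/-- In every ball around `x`, avoiding a null set, one finds a point where `g < 0`. -/
private lemma exists_good' {n : ℕ} (g : EuclideanSpace ℝ (Fin n) → ℝ) (hgc : Continuous g)
    (x : EuclideanSpace ℝ (Fin n))
    (hne : ∀ δ > (0:ℝ), ∃ y ∈ Metric.ball x δ, g y < 0)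
    (δ : ℝ) (hδ : 0 < δ) (S : Set (EuclideanSpace ℝ (Fin n))) (hS : volume S = 0) :
    ∃ y, y ∈ Metric.ball x δ ∧ y ∉ S ∧ g y < 0 := by
  set V := Metric.ball x δ ∩ {y | g y < 0} with hV
  have hVo : IsOpen V := Metric.isOpen_ball.inter (isOpen_lt hgc continuous_const)
  obtain ⟨y, hy1, hy2⟩ := hne δ hδ
  have hVne : V.Nonempty := ⟨y, hy1, hy2⟩
  have hpos := hVo.measure_pos volume hVne
  have hne2 : (V \ S).Nonempty :=
    nonempty_of_measure_ne_zero (by rw [measure_diff_null hS]; exact hpos.ne')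
  obtain ⟨z, ⟨hz1, hz2⟩, hz3⟩ := hne2
  exact ⟨z, hz1, hz3, hz2⟩

/-- The sliding vector field is well defined: at a point of the switching surface where
`a = ∇g·f₁ > 0` and `b = ∇g·f₂ < 0`, the unique element of the Filippov regularization
tangent to `Σ` is `(a f₂ − b f₁)/(a − b)`. -/
theorem sliding_vector_field {n m : ℕ}
    (U : Set (EuclideanSpace ℝ (Fin m))) (hU : IsCompact U)
    (g : EuclideanSpace ℝ (Fin n) → ℝ) (hg : ContDiff ℝ (⊤:ℕ∞) g)
    (hreg : ∀ x, g x = 0 → fderiv ℝ g x ≠ 0)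
    (f₁ f₂ : EuclideanSpace ℝ (Fin n) → EuclideanSpace ℝ (Fin m) → EuclideanSpace ℝ (Fin n))
    (hf₁ : ContDiff ℝ (⊤:ℕ∞) (uncurry f₁)) (hf₂ : ContDiff ℝ (⊤:ℕ∞) (uncurry f₂))
    (L : ℝ)
    (hL₁ : ∀ u ∈ U, ∀ x y, ‖f₁ x u - f₁ y u‖ ≤ L * ‖x - y‖)
    (hL₂ : ∀ u ∈ U, ∀ x y, ‖f₂ x u - f₂ y u‖ ≤ L * ‖x - y‖)
    (x : EuclideanSpace ℝ (Fin n)) (hx : g x = 0)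
    (u : EuclideanSpace ℝ (Fin m)) (hu : u ∈ U)
    (ha : 0 < fderiv ℝ g x (f₁ x u)) (hb : fderiv ℝ g x (f₂ x u) < 0) :
    {v ∈ filippovReg (fun y w => if g y < 0 then f₁ y w else f₂ y w) {y | g y ≠ 0} x u |
        fderiv ℝ g x v = 0}
      = {(fderiv ℝ g x (f₁ x u) - fderiv ℝ g x (f₂ x u))⁻¹ •
          (fderiv ℝ g x (f₁ x u) • f₂ x u - fderiv ℝ g x (f₂ x u) • f₁ x u)} := by
  classical
  set d := fderiv ℝ g x with hd_def
  set a := d (f₁ x u) with ha_def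
  set b := d (f₂ x u) with hb_def
  set p := f₁ x u with hp_def
  set q := f₂ x u with hq_def
  have hab : 0 < a - b := by linarith
  have hab' : a - b ≠ 0 := hab.ne'
  set vstar := (a - b)⁻¹ • (a • q - b • p) with hvstar_def
  have hgc : Continuous g := hg.continuous
  have hF₁ : Continuous (fun y => f₁ y u) :=
    hf₁.continuous.comp (continuous_id.prodMk continuous_const)
  have hF₂ : Continuous (fun y => f₂ y u) :=
    hf₂.continuous.comp (continuous_id.prodMk continuous_const)
  have hd : HasFDerivAt g d x :=
    ((hg.differentiable (by simp)).differentiableAt).hasFDerivAt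
  -- g takes negative values in every ball
  have hneg : ∀ δ > (0:ℝ), ∃ y ∈ Metric.ball x δ, g y < 0 :=
    exists_ball_neg' g hd hx q hb
  -- g takes positive values in every ball
  have hpos : ∀ δ > (0:ℝ), ∃ y ∈ Metric.ball x δ, 0 < g y := by
    have hd' : HasFDerivAt (fun y => -g y) (-d) x := hd.neg
    have h' : (-d) p < 0 := by simp [ha_def]; linarith
    intro δ hδ
    obtain ⟨y, hy1, hy2⟩ := exists_ball_neg' (fun y => -g y) hd' (by simp [hx]) p h' δ hδ
    exact ⟨y, hy1, by linarith⟩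
  set F : EuclideanSpace ℝ (Fin n) → EuclideanSpace ℝ (Fin m) → EuclideanSpace ℝ (Fin n) :=
    fun y w => if g y < 0 then f₁ y w else f₂ y w with hF_def
  ext v
  simp only [Set.mem_setOf_eq, Set.mem_singleton_iff, Set.mem_sep_iff]
  constructor
  · rintro ⟨hvF, hvd⟩
    -- v belongs to the segment [p, q]
    have hseg : v ∈ segment ℝ p q := by
      have hclosed : IsClosed (segment ℝ p q) := isClosed_segment'' p q
      rw [hclosed.mem_iff_infDist_zero ⟨p, left_mem_segment ℝ p q⟩]
      have hnonneg : 0 ≤ Metric.infDist v (segment ℝ p q) := Metric.infDist_nonneg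
      have hle : ∀ ε > (0:ℝ), Metric.infDist v (segment ℝ p q) ≤ ε := by
        intro ε hε
        have hε2 : 0 < ε / 2 := by linarith
        obtain ⟨δ₁, hδ₁, hδ₁'⟩ := Metric.continuousAt_iff.mp (hF₁.continuousAt (x := x)) (ε/2) hε2
        obtain ⟨δ₂, hδ₂, hδ₂'⟩ := Metric.continuousAt_iff.mp (hF₂.continuousAt (x := x)) (ε/2) hε2
        set δ := min δ₁ δ₂ with hδ_def
        have hδ : 0 < δ := lt_min hδ₁ hδ₂
        simp only [filippovReg, Set.mem_iInter] at hvF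
        have hvmem := hvF δ hδ ∅ (by simp)
        -- the image is contained in segment + closedBall 0 (ε/2)
        set C : Set (EuclideanSpace ℝ (Fin n)) :=
          segment ℝ p q + Metric.closedBall (0 : EuclideanSpace ℝ (Fin n)) (ε/2) with hC_def
        have hCconv : Convex ℝ C := (convex_segment p q).add (convex_closedBall (0 : EuclideanSpace ℝ (Fin n)) (ε/2))
        have himg : (fun y => F y u) '' ((Metric.ball x δ \ ∅) ∩ {y | g y ≠ 0}) ⊆ C := by
          rintro _ ⟨y, ⟨⟨hyb, -⟩, hyD⟩, rfl⟩
          show F y u ∈ C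
          have hyx : dist y x < δ := Metric.mem_ball.mp hyb
          by_cases hgy : g y < 0
          · have h1 : dist (f₁ y u) p < ε/2 := hδ₁' (lt_of_lt_of_le hyx (min_le_left _ _))
            have : F y u = p + (f₁ y u - p) := by simp [hF_def, if_pos hgy]
            rw [this]
            exact Set.add_mem_add (left_mem_segment ℝ p q)
              (by rw [Metric.mem_closedBall, dist_zero_right, ← dist_eq_norm]; exact h1.le)
          · have h2 : dist (f₂ y u) q < ε/2 := hδ₂' (lt_of_lt_of_le hyx (min_le_right _ _))
            have : F y u = q + (f₂ y u - q) := by simp [hF_def, if_neg hgy]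
            rw [this]
            exact Set.add_mem_add (right_mem_segment ℝ p q)
              (by rw [Metric.mem_closedBall, dist_zero_right, ← dist_eq_norm]; exact h2.le)
        have hsubC : convexHull ℝ ((fun y => F y u) ''
            ((Metric.ball x δ \ ∅) ∩ {y | g y ≠ 0})) ⊆ C := convexHull_min himg hCconv
        obtain ⟨c, hc1, hc2⟩ := Metric.mem_closure_iff.mp hvmem (ε/2) hε2
        obtain ⟨s₀, hs₀, w, hw, hcw⟩ := Set.mem_add.mp (hsubC hc1)
        have hws : dist c s₀ = ‖w‖ := by
          rw [← hcw, dist_eq_norm]; simp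
        have : Metric.infDist v (segment ℝ p q) ≤ dist v s₀ :=
          Metric.infDist_le_dist_of_mem hs₀
        have hwn : ‖w‖ ≤ ε/2 := by
          rw [← dist_zero_right]; exact Metric.mem_closedBall.mp hw
        calc Metric.infDist v (segment ℝ p q) ≤ dist v s₀ := this
          _ ≤ dist v c + dist c s₀ := dist_triangle v c s₀
          _ ≤ ε/2 + ε/2 := by rw [hws]; exact add_le_add hc2.le hwn
          _ = ε := by ring
      have : Metric.infDist v (segment ℝ p q) ≤ 0 :=
        le_of_forall_pos_le_add (fun ε hε => by simpa using hle ε hε)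
      linarith
    obtain ⟨t₁, t₂, ht₁, ht₂, hsum, hv⟩ := hseg
    have hdv : t₁ * a + t₂ * b = 0 := by
      have := hvd
      rw [← hv] at this
      simpa [map_add, _root_.map_smul, smul_eq_mul, ha_def, hb_def] using this
    have ht₁' : t₁ = -b / (a - b) := by
      field_simp
      linear_combination hdv - b * hsum
    have ht₂' : t₂ = a / (a - b) := by
      field_simp
      linear_combination a * hsum - hdv
    rw [← hv, ht₁', ht₂', hvstar_def]
    rw [smul_sub, smul_smul, smul_smul]
    rw [div_eq_mul_inv, div_eq_mul_inv]
    module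
  · rintro rfl
    constructor
    · simp only [filippovReg, Set.mem_iInter]
      intro δ hδ S hS
      -- p is in the closure of the image
      have hpmem : p ∈ closure ((fun y => F y u) '' ((Metric.ball x δ \ S) ∩ {y | g y ≠ 0})) := by
        rw [Metric.mem_closure_iff]
        intro ε hε
        obtain ⟨δ₁, hδ₁, hδ₁'⟩ := Metric.continuousAt_iff.mp (hF₁.continuousAt (x := x)) ε hε
        obtain ⟨y, hy1, hy2, hy3⟩ := exists_good' g hgc x hneg (min δ δ₁) (lt_min hδ hδ₁) S hS
        have hyδ : y ∈ Metric.ball x δ :=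
          Metric.mem_ball.mpr (lt_of_lt_of_le (Metric.mem_ball.mp hy1) (min_le_left _ _))
        refine ⟨F y u, ⟨y, ⟨⟨hyδ, hy2⟩, ne_of_lt hy3⟩, rfl⟩, ?_⟩
        have : F y u = f₁ y u := by simp [hF_def, if_pos hy3]
        rw [this, dist_comm]
        exact hδ₁' (lt_of_lt_of_le (Metric.mem_ball.mp hy1) (min_le_right _ _))
      -- q is in the closure of the image
      have hqmem : q ∈ closure ((fun y => F y u) '' ((Metric.ball x δ \ S) ∩ {y | g y ≠ 0})) := by
        rw [Metric.mem_closure_iff]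
        intro ε hε
        obtain ⟨δ₂, hδ₂, hδ₂'⟩ := Metric.continuousAt_iff.mp (hF₂.continuousAt (x := x)) ε hε
        have hpos' : ∀ δ' > (0:ℝ), ∃ y ∈ Metric.ball x δ', -g y < 0 := by
          intro δ' hδ'
          obtain ⟨y, hy1, hy2⟩ := hpos δ' hδ'
          exact ⟨y, hy1, by linarith⟩
        obtain ⟨y, hy1, hy2, hy3⟩ := exists_good' (fun y => -g y) hgc.neg x hpos'
          (min δ δ₂) (lt_min hδ hδ₂) S hS
        have hgy : 0 < g y := by linarith [hy3]
        have hyδ : y ∈ Metric.ball x δ :=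
          Metric.mem_ball.mpr (lt_of_lt_of_le (Metric.mem_ball.mp hy1) (min_le_left _ _))
        refine ⟨F y u, ⟨y, ⟨⟨hyδ, hy2⟩, (ne_of_gt hgy)⟩, rfl⟩, ?_⟩
        have : F y u = f₂ y u := by simp [hF_def, if_neg (not_lt.mpr hgy.le)]
        rw [this, dist_comm]
        exact hδ₂' (lt_of_lt_of_le (Metric.mem_ball.mp hy1) (min_le_right _ _))
      have hconv : Convex ℝ (closure (convexHull ℝ ((fun y => F y u) ''
          ((Metric.ball x δ \ S) ∩ {y | g y ≠ 0})))) :=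
        (convex_convexHull ℝ _).closure
      have hp' : p ∈ closure (convexHull ℝ ((fun y => F y u) ''
          ((Metric.ball x δ \ S) ∩ {y | g y ≠ 0}))) :=
        closure_mono (subset_convexHull ℝ _) hpmem
      have hq' : q ∈ closure (convexHull ℝ ((fun y => F y u) ''
          ((Metric.ball x δ \ S) ∩ {y | g y ≠ 0}))) :=
        closure_mono (subset_convexHull ℝ _) hqmem
      refine hconv.segment_subset hp' hq' ?_
      refine ⟨-b / (a - b), a / (a - b), div_nonneg (by linarith) hab.le,
        div_nonneg ha.le hab.le, by field_simp; ring, ?_⟩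
      rw [hvstar_def, smul_sub, smul_smul, smul_smul, div_eq_mul_inv, div_eq_mul_inv]
      module
    · show d ((a - b)⁻¹ • (a • q - b • p)) = 0
      simp only [_root_.map_smul, map_sub, smul_eq_mul, ← ha_def, ← hb_def]
      ring
end

section
/- Under the hyperplane reset setup, let φ be a hybrid transition function, let f₁, f₂ : ℝⁿ × ℝᵐ → ℝⁿ be smooth (C^∞), and fix ε > 0. Define g_e^ε(x) = ĝᵀx − (c + ε), p^ε(x) = x − ĝ g_e^ε(x), and R̄^ε(x) = R(p^ε(x) − ĝ ε) + r̂ g_e^ε(x) (which is a C^∞ diffeomorphism of ℝⁿ, so DR̄^ε(x) is invertible for every x). Then the relaxed glued vector field f_e^ε(x,u) = (1 − φ(g_e(x)/ε)) f₁(x,u) + φ(g_e(x)/ε) · (DR̄^ε(x))⁻¹ · f₂(R̄^ε(x), u) is a smooth (C^∞) map from ℝⁿ × ℝᵐ to ℝⁿ. -/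
open Set Function
open scoped RealInnerProductSpace

/-- A hybrid transition function: smooth, `[0,1]`-valued, `0` below `0`, `1` above `1`,
and monotonically increasing on `(0,1)`. -/
def IsHybridTransitionFn (φ : ℝ → ℝ) : Prop :=
  ContDiff ℝ (⊤:ℕ∞) φ ∧ (∀ a, φ a ∈ Icc (0:ℝ) 1) ∧
  (∀ a, a ≤ (0:ℝ) → φ a = 0) ∧ (∀ a, (1:ℝ) ≤ a → φ a = 1) ∧
  MonotoneOn φ (Ioo (0:ℝ) 1)

set_option maxHeartbeats 1000000 in
/-- Under the hyperplane reset setup, the relaxed glued vector field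
`f_e^ε(x,u) = (1 − φ(g_e(x)/ε)) f₁(x,u) + φ(g_e(x)/ε) (DR̄^ε(x))⁻¹ f₂(R̄^ε(x),u)`
is a smooth map from `ℝⁿ × ℝᵐ` to `ℝⁿ`. -/
theorem relaxed_glued_field_smooth {n m : ℕ}
    (ghat rhat : EuclideanSpace ℝ (Fin n)) (hg : ‖ghat‖ = 1) (hr : ‖rhat‖ = 1) (c d : ℝ)
    (R Rinv : EuclideanSpace ℝ (Fin n) → EuclideanSpace ℝ (Fin n))
    (hR : ContDiff ℝ (⊤:ℕ∞) R) (hRinv : ContDiff ℝ (⊤:ℕ∞) Rinv)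
    (hleft : Function.LeftInverse Rinv R) (hright : Function.RightInverse Rinv R)
    (hguard : R '' {x | ⟪ghat, x⟫ - c = 0} = {y | ⟪rhat, y⟫ - d = 0})
    (φ : ℝ → ℝ) (hφ : IsHybridTransitionFn φ)
    (f₁ f₂ : EuclideanSpace ℝ (Fin n) → EuclideanSpace ℝ (Fin m) → EuclideanSpace ℝ (Fin n))
    (hf₁ : ContDiff ℝ (⊤:ℕ∞) (uncurry f₁)) (hf₂ : ContDiff ℝ (⊤:ℕ∞) (uncurry f₂))
    (ε : ℝ) (hε : 0 < ε) :
    ContDiff ℝ (⊤:ℕ∞) (uncurry fun (x : EuclideanSpace ℝ (Fin n))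
        (u : EuclideanSpace ℝ (Fin m)) =>
      (1 - φ ((⟪ghat, x⟫ - c) / ε)) • f₁ x u +
      φ ((⟪ghat, x⟫ - c) / ε) •
        (fderiv ℝ (fun z : EuclideanSpace ℝ (Fin n) =>
            R ((z - (⟪ghat, z⟫ - (c + ε)) • ghat) - ε • ghat)
              + (⟪ghat, z⟫ - (c + ε)) • rhat) x).inverse
          (f₂ (R ((x - (⟪ghat, x⟫ - (c + ε)) • ghat) - ε • ghat)
              + (⟪ghat, x⟫ - (c + ε)) • rhat) u)) := by
  classical
  have hgg : ⟪ghat, ghat⟫ = (1:ℝ) := by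
    rw [real_inner_self_eq_norm_mul_norm, hg]; ring
  have hrr : ⟪rhat, rhat⟫ = (1:ℝ) := by
    rw [real_inner_self_eq_norm_mul_norm, hr]; ring
  set F : EuclideanSpace ℝ (Fin n) → EuclideanSpace ℝ (Fin n) := fun z =>
      R ((z - (⟪ghat, z⟫ - (c + ε)) • ghat) - ε • ghat) + (⟪ghat, z⟫ - (c + ε)) • rhat
    with hF
  set G : EuclideanSpace ℝ (Fin n) → EuclideanSpace ℝ (Fin n) := fun y =>
      Rinv (y - (⟪rhat, y⟫ - d) • rhat) + ((⟪rhat, y⟫ - d) + ε) • ghat with hGdef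
  -- the two guard facts from `hguard`
  have hRim : ∀ p, ⟪ghat, p⟫ = c → ⟪rhat, R p⟫ = d := by
    intro p hp
    have h : R p ∈ R '' {x | ⟪ghat, x⟫ - c = 0} :=
      ⟨p, by simp only [Set.mem_setOf_eq, hp, sub_self], rfl⟩
    rw [hguard] at h
    simp only [Set.mem_setOf_eq, sub_eq_zero] at h
    exact h
  have hRinvim : ∀ y, ⟪rhat, y⟫ = d → ⟪ghat, Rinv y⟫ = c := by
    intro y hy
    have h : y ∈ R '' {x | ⟪ghat, x⟫ - c = 0} := by
      rw [hguard]; simp only [Set.mem_setOf_eq, hy, sub_self]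
    rcases h with ⟨x, hx, rfl⟩
    simp only [mem_setOf_eq, sub_eq_zero] at hx
    rw [hleft x]; exact hx
  -- G ∘ F = id
  have hGF : ∀ z, G (F z) = z := by
    intro z
    have hpg : ⟪ghat, (z - (⟪ghat, z⟫ - (c + ε)) • ghat) - ε • ghat⟫ = c := by
      simp only [inner_sub_right, inner_smul_right, hgg, mul_one]; ring
    have hRp : ⟪rhat, R ((z - (⟪ghat, z⟫ - (c + ε)) • ghat) - ε • ghat)⟫ = d :=
      hRim _ hpg
    have hb : ⟪rhat, F z⟫ - d = ⟪ghat, z⟫ - (c + ε) := by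
      simp only [hF, inner_add_right, inner_smul_right, hRp, hrr, mul_one]; ring
    simp only [hGdef, hb]
    have harg : F z - (⟪ghat, z⟫ - (c + ε)) • rhat
        = R ((z - (⟪ghat, z⟫ - (c + ε)) • ghat) - ε • ghat) := by
      simp only [hF, add_sub_cancel_right]
    rw [harg, hleft _]
    module
  -- F ∘ G = id
  have hFG : ∀ y, F (G y) = y := by
    intro y
    have hyr : ⟪rhat, y - (⟪rhat, y⟫ - d) • rhat⟫ = d := by
      simp only [inner_sub_right, inner_smul_right, hrr, mul_one]; ring
    have hc : ⟪ghat, Rinv (y - (⟪rhat, y⟫ - d) • rhat)⟫ = c := hRinvim _ hyr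
    have ha : ⟪ghat, G y⟫ - (c + ε) = ⟪rhat, y⟫ - d := by
      simp only [hGdef, inner_add_right, inner_smul_right, hc, hgg]
      ring
    simp only [hF, ha]
    have harg : (G y - (⟪rhat, y⟫ - d) • ghat) - ε • ghat
        = Rinv (y - (⟪rhat, y⟫ - d) • rhat) := by
      simp only [hGdef]
      module
    rw [harg, hright _]
    module
  -- smoothness of F and G
  have hinner_g : ContDiff ℝ (⊤:ℕ∞) (fun z : EuclideanSpace ℝ (Fin n) => ⟪ghat, z⟫) :=
    contDiff_const.inner ℝ contDiff_id
  have hinner_r : ContDiff ℝ (⊤:ℕ∞) (fun z : EuclideanSpace ℝ (Fin n) => ⟪rhat, z⟫) :=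
    contDiff_const.inner ℝ contDiff_id
  have hFsm : ContDiff ℝ (⊤:ℕ∞) F := by
    apply ContDiff.add
    · have h := hR.comp (((contDiff_id.sub ((hinner_g.sub contDiff_const).smul
        contDiff_const)).sub contDiff_const) :
        ContDiff ℝ (⊤:ℕ∞) (fun z : EuclideanSpace ℝ (Fin n) =>
          (z - (⟪ghat, z⟫ - (c + ε)) • ghat) - ε • ghat))
      exact h
    · exact (hinner_g.sub contDiff_const).smul contDiff_const
  have hGsm : ContDiff ℝ (⊤:ℕ∞) G := by
    apply ContDiff.add
    · have h := hRinv.comp ((contDiff_id.sub ((hinner_r.sub contDiff_const).smul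
        contDiff_const)) :
        ContDiff ℝ (⊤:ℕ∞) (fun y : EuclideanSpace ℝ (Fin n) =>
          y - (⟪rhat, y⟫ - d) • rhat))
      exact h
    · exact ((hinner_r.sub contDiff_const).add contDiff_const).smul contDiff_const
  -- invertibility of the derivative of F
  have hFd : Differentiable ℝ F := hFsm.differentiable (by simp)
  have hGd : Differentiable ℝ G := hGsm.differentiable (by simp)
  have hunit : ∀ x, IsUnit (fderiv ℝ F x) := by
    intro x
    have h1 : (fderiv ℝ G (F x)).comp (fderiv ℝ F x)
        = ContinuousLinearMap.id ℝ (EuclideanSpace ℝ (Fin n)) := by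
      rw [← fderiv_comp x (hGd (F x)) (hFd x)]
      have hid : G ∘ F = id := funext hGF
      rw [hid, fderiv_id]
    have h2 : (fderiv ℝ F x).comp (fderiv ℝ G (F x))
        = ContinuousLinearMap.id ℝ (EuclideanSpace ℝ (Fin n)) := by
      have hid : F ∘ G = id := funext hFG
      have h := fderiv_comp (F x) (by rw [hGF]; exact hFd x) (hGd (F x))
      rw [hid, fderiv_id, hGF] at h
      exact h.symm
    exact ⟨⟨fderiv ℝ F x, fderiv ℝ G (F x), h2, h1⟩, rfl⟩
  have hinv_sm : ContDiff ℝ (⊤:ℕ∞) (fun x => (fderiv ℝ F x).inverse) := by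
    rw [contDiff_iff_contDiffAt]
    intro x
    have hfd : ContDiffAt ℝ (⊤:ℕ∞) (fderiv ℝ F) x :=
      (hFsm.fderiv_right (by exact_mod_cast le_top)).contDiffAt
    have hinv : ContDiffAt ℝ (⊤:ℕ∞) Ring.inverse (fderiv ℝ F x) := by
      have h := contDiffAt_ringInverse (n := ((⊤:ℕ∞) : WithTop ℕ∞)) ℝ (hunit x).unit
      rwa [(hunit x).unit_spec] at h
    have h : ContDiffAt ℝ (⊤:ℕ∞) (fun x => Ring.inverse (fderiv ℝ F x)) x :=
      hinv.comp x hfd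
    simpa [ContinuousLinearMap.ringInverse_eq_inverse] using h
  -- assemble
  rw [uncurry_def]
  have hφs : ContDiff ℝ (⊤:ℕ∞)
      (fun p : EuclideanSpace ℝ (Fin n) × EuclideanSpace ℝ (Fin m) =>
        φ ((⟪ghat, p.1⟫ - c) / ε)) :=
    hφ.1.comp (((hinner_g.comp contDiff_fst).sub contDiff_const).div_const ε)
  have hf1' : ContDiff ℝ (⊤:ℕ∞)
      (fun p : EuclideanSpace ℝ (Fin n) × EuclideanSpace ℝ (Fin m) => f₁ p.1 p.2) := by
    rw [← uncurry_def]; exact hf₁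
  have hf2' : ContDiff ℝ (⊤:ℕ∞)
      (fun p : EuclideanSpace ℝ (Fin n) × EuclideanSpace ℝ (Fin m) => f₂ (F p.1) p.2) := by
    have h := hf₂.comp (((hFsm.comp contDiff_fst)).prodMk
      (contDiff_snd : ContDiff ℝ (⊤:ℕ∞) (fun p : EuclideanSpace ℝ (Fin n) ×
        EuclideanSpace ℝ (Fin m) => p.2)))
    exact h
  exact ((contDiff_const.sub hφs).smul hf1').add
    (hφs.smul (((hinv_sm.comp contDiff_fst)).clm_apply hf2'))
end
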